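/- Let s > 2 be an integer. The volume of the polytope {(x₁,x₂,x₃,x₄) ∈ [0,1)⁴ : x₁+x₂+x₃+x₄ ≥ 3} equals 1/4!, the volume of {x ∈ [0,1)⁴ : x₁+x₂+x₃+x₄ ≥ 2} equals 1/2, and the volume of {x ∈ [0,1)⁴ : x₁+x₂+x₃+x₄ ≥ 1} equals 23/4!. Consequently the single-site measures of the spatiotemporal cat satisfy μ(−3) = 1/(48s), μ(−2) = 1/(4s), μ(−1) = 1/(2s) − 1/(48s), μ(m) = 1/(2s) for m ∈ {0,…,2s−4}, and these measures together with their conjugates sum to 1. -/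

import Mathlib

open MeasureTheory

/-! ### Auxiliary lemmas for the spatiotemporal cat single-site measures -/

private lemma stc_null_level (L : (Fin 4 → ℝ) →ₗ[ℝ] ℝ) (v : Fin 4 → ℝ) (hv : L v ≠ 0) (c : ℝ) :
    volume {x : Fin 4 → ℝ | L x = c} = 0 := by
  have hKtop : LinearMap.ker L ≠ ⊤ := by
    intro h
    exact hv (LinearMap.mem_ker.mp (by rw [h]; exact Submodule.mem_top))
  set x₀ : Fin 4 → ℝ := (-c / L v) • v with hx₀
  have hLx₀ : L x₀ = -c := by
    rw [hx₀, LinearMap.map_smul, smul_eq_mul]; field_simp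
  have hset : {x : Fin 4 → ℝ | L x = c} =
      (fun x => x + x₀) ⁻¹' ((LinearMap.ker L : Submodule ℝ (Fin 4 → ℝ)) : Set (Fin 4 → ℝ)) := by
    ext x
    simp only [Set.mem_setOf_eq, Set.mem_preimage, SetLike.mem_coe, LinearMap.mem_ker,
      map_add, hLx₀]
    constructor <;> intro h <;> linarith
  rw [hset, measure_preimage_add_right]
  exact Measure.addHaar_submodule volume _ hKtop

private noncomputable def stcLsum : (Fin 4 → ℝ) →ₗ[ℝ] ℝ := ∑ i : Fin 4, LinearMap.proj i

private noncomputable def stcLpair (i j : Fin 4) : (Fin 4 → ℝ) →ₗ[ℝ] ℝ :=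
  (LinearMap.proj i : (Fin 4 → ℝ) →ₗ[ℝ] ℝ) - (LinearMap.proj j : (Fin 4 → ℝ) →ₗ[ℝ] ℝ)

private lemma stc_null_sum (c : ℝ) : volume {x : Fin 4 → ℝ | ∑ i, x i = c} = 0 := by
  have h := stc_null_level stcLsum (fun _ => 1) (by simp [stcLsum, LinearMap.sum_apply]) c
  simpa [stcLsum, LinearMap.sum_apply] using h

private lemma stc_null_coord (i : Fin 4) (c : ℝ) : volume {x : Fin 4 → ℝ | x i = c} = 0 := by
  have h := stc_null_level (LinearMap.proj i) (Pi.single i 1) (by simp) c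
  simpa using h

private lemma stc_null_pair (i j : Fin 4) (hij : i ≠ j) :
    volume {x : Fin 4 → ℝ | x i = x j} = 0 := by
  have h := stc_null_level (stcLpair i j) (Pi.single i 1)
    (by simp [stcLpair, Pi.single_apply, Ne.symm hij]) 0
  have hset : {x : Fin 4 → ℝ | stcLpair i j x = 0} = {x : Fin 4 → ℝ | x i = x j} := by
    ext x; simp [stcLpair, sub_eq_zero]
  rwa [hset] at h

private lemma stc_cube_vol : volume {x : Fin 4 → ℝ | ∀ i, x i ∈ Set.Icc (0:ℝ) 1} = 1 := by
  have h : {x : Fin 4 → ℝ | ∀ i, x i ∈ Set.Icc (0:ℝ) 1} =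
      Set.pi Set.univ (fun _ : Fin 4 => Set.Icc (0:ℝ) 1) := by
    ext x; simp [Set.mem_pi, Set.mem_Icc, Pi.le_def, forall_and]
  rw [h, volume_pi_pi]
  simp

private lemma stc_meas_sum : Measurable (fun x : Fin 4 → ℝ => ∑ i, x i) :=
  Finset.univ.measurable_sum fun i _ => measurable_pi_apply i

private lemma stc_meas_cube : MeasurableSet {x : Fin 4 → ℝ | ∀ i, x i ∈ Set.Icc (0:ℝ) 1} := by
  rw [show {x : Fin 4 → ℝ | ∀ i, x i ∈ Set.Icc (0:ℝ) 1} =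
      ⋂ i, {x : Fin 4 → ℝ | x i ∈ Set.Icc (0:ℝ) 1} by ext; simp]
  exact MeasurableSet.iInter fun i => (measurable_pi_apply i) measurableSet_Icc

private lemma stc_meas_ge (c : ℝ) :
    MeasurableSet {x : Fin 4 → ℝ | (∀ i, x i ∈ Set.Icc (0:ℝ) 1) ∧ c ≤ ∑ i, x i} :=
  stc_meas_cube.inter (measurableSet_le measurable_const stc_meas_sum)

private lemma stc_meas_le (c : ℝ) :
    MeasurableSet {x : Fin 4 → ℝ | (∀ i, x i ∈ Set.Icc (0:ℝ) 1) ∧ ∑ i, x i ≤ c} :=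
  stc_meas_cube.inter (measurableSet_le stc_meas_sum measurable_const)

/-- Reflection `x ↦ 1 - x`. -/
private lemma stc_reflect (c : ℝ) :
    volume {x : Fin 4 → ℝ | (∀ i, x i ∈ Set.Icc (0:ℝ) 1) ∧ c ≤ ∑ i, x i} =
      volume {x : Fin 4 → ℝ | (∀ i, x i ∈ Set.Icc (0:ℝ) 1) ∧ ∑ i, x i ≤ 4 - c} := by
  have hmp : MeasurePreserving (fun x : Fin 4 → ℝ => (fun _ : Fin 4 => (1:ℝ)) - x) volume volume :=
    Measure.measurePreserving_sub_left volume _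
  have hpre : (fun x : Fin 4 → ℝ => (fun _ : Fin 4 => (1:ℝ)) - x) ⁻¹'
      {x : Fin 4 → ℝ | (∀ i, x i ∈ Set.Icc (0:ℝ) 1) ∧ ∑ i, x i ≤ 4 - c} =
      {x : Fin 4 → ℝ | (∀ i, x i ∈ Set.Icc (0:ℝ) 1) ∧ c ≤ ∑ i, x i} := by
    ext x
    have hsum : (∑ j, ((1:ℝ) - x j)) = 4 - ∑ i, x i := by
      rw [Fin.sum_univ_four (f := fun j => (1:ℝ) - x j), Fin.sum_univ_four (f := x)]; ring
    simp only [Set.mem_preimage, Set.mem_setOf_eq, Pi.sub_apply, hsum, Set.mem_Icc]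
    constructor
    · rintro ⟨h1, h2⟩
      exact ⟨fun i => ⟨by linarith [(h1 i).2], by linarith [(h1 i).1]⟩, by linarith⟩
    · rintro ⟨h1, h2⟩
      exact ⟨fun i => ⟨by linarith [(h1 i).2], by linarith [(h1 i).1]⟩, by linarith⟩
  rw [← hpre, hmp.measure_preimage (stc_meas_le (4 - c)).nullMeasurableSet]

/-- Complementary halves of the cube. -/
private lemma stc_split (c : ℝ) :
    volume {x : Fin 4 → ℝ | (∀ i, x i ∈ Set.Icc (0:ℝ) 1) ∧ c ≤ ∑ i, x i} +
      volume {x : Fin 4 → ℝ | (∀ i, x i ∈ Set.Icc (0:ℝ) 1) ∧ ∑ i, x i ≤ c} = 1 := by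
  set A := {x : Fin 4 → ℝ | (∀ i, x i ∈ Set.Icc (0:ℝ) 1) ∧ c ≤ ∑ i, x i}
  set B := {x : Fin 4 → ℝ | (∀ i, x i ∈ Set.Icc (0:ℝ) 1) ∧ ∑ i, x i ≤ c}
  have hU : A ∪ B = {x : Fin 4 → ℝ | ∀ i, x i ∈ Set.Icc (0:ℝ) 1} := by
    ext x
    simp only [A, B, Set.mem_union, Set.mem_setOf_eq]
    constructor
    · rintro (⟨h, _⟩ | ⟨h, _⟩) <;> exact h
    · intro h
      rcases le_total c (∑ i, x i) with hc | hc
      · exact Or.inl ⟨h, hc⟩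
      · exact Or.inr ⟨h, hc⟩
  have hI : volume (A ∩ B) = 0 := by
    refine measure_mono_null ?_ (stc_null_sum c)
    rintro x ⟨⟨_, h1⟩, ⟨_, h2⟩⟩
    exact le_antisymm h2 h1
  have := measure_union_add_inter (μ := volume) A (stc_meas_le c)
  rw [hU, stc_cube_vol, hI, add_zero] at this
  exact this.symm

/-! ### The sorted regions -/

private def stcO (σ : Equiv.Perm (Fin 4)) : Set (Fin 4 → ℝ) :=
  {x | (∀ i, x i ∈ Set.Icc (0:ℝ) 1) ∧ Monotone (x ∘ σ)}

private lemma stc_meas_O (σ : Equiv.Perm (Fin 4)) : MeasurableSet (stcO σ) := by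
  have h2 : MeasurableSet {x : Fin 4 → ℝ | Monotone (x ∘ σ)} := by
    rw [show {x : Fin 4 → ℝ | Monotone (x ∘ σ)} =
      ⋂ (i) (j) (_ : i ≤ j), {x : Fin 4 → ℝ | x (σ i) ≤ x (σ j)} by
      ext x; simp [Monotone]]
    exact MeasurableSet.iInter fun i => MeasurableSet.iInter fun j =>
      MeasurableSet.iInter fun _ =>
        measurableSet_le (measurable_pi_apply _) (measurable_pi_apply _)
  exact stc_meas_cube.inter h2

private lemma stc_vol_O (σ : Equiv.Perm (Fin 4)) : volume (stcO σ) = volume (stcO 1) := by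
  have hmp := volume_measurePreserving_piCongrLeft (fun _ : Fin 4 => ℝ) σ⁻¹
  have hpre : (MeasurableEquiv.piCongrLeft (fun _ : Fin 4 => ℝ) σ⁻¹) ⁻¹' (stcO 1) = stcO σ := by
    ext x
    have happ : ∀ i, (MeasurableEquiv.piCongrLeft (fun _ : Fin 4 => ℝ) σ⁻¹) x i = x (σ i) := by
      intro i
      simp [MeasurableEquiv.piCongrLeft, Equiv.piCongrLeft, Equiv.piCongrLeft',
        Equiv.Perm.inv_def]
    simp only [Set.mem_preimage, stcO, Set.mem_setOf_eq]
    constructor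
    · rintro ⟨h1, h2⟩
      refine ⟨fun i => ?_, fun a b hab => ?_⟩
      · have := h1 (σ.symm i)
        rwa [happ, Equiv.apply_symm_apply] at this
      · have := h2 hab
        simpa [happ] using this
    · rintro ⟨h1, h2⟩
      refine ⟨fun i => by rw [happ]; exact h1 _, fun a b hab => ?_⟩
      simp only [Function.comp, happ, Equiv.Perm.coe_one, id_eq]
      exact h2 hab
  calc volume (stcO σ)
      = volume ((MeasurableEquiv.piCongrLeft (fun _ : Fin 4 => ℝ) σ⁻¹) ⁻¹' (stcO 1)) := by
        rw [hpre]
    _ = volume (stcO 1) := hmp.measure_preimage (stc_meas_O 1).nullMeasurableSet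

private def stcN : Set (Fin 4 → ℝ) :=
  ⋃ (p : Fin 4 × Fin 4) (_ : p.1 ≠ p.2), {x | x p.1 = x p.2}

private lemma stc_meas_N : MeasurableSet stcN :=
  MeasurableSet.iUnion fun _ => MeasurableSet.iUnion fun _ =>
    measurableSet_eq_fun (measurable_pi_apply _) (measurable_pi_apply _)

private lemma stc_null_N : volume stcN = 0 :=
  measure_iUnion_null fun p => measure_iUnion_null fun hp => stc_null_pair p.1 p.2 hp

private lemma stc_cover :
    {x : Fin 4 → ℝ | ∀ i, x i ∈ Set.Icc (0:ℝ) 1} ⊆ ⋃ σ : Equiv.Perm (Fin 4), stcO σ :=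
  fun x hx => Set.mem_iUnion.mpr ⟨Tuple.sort x, hx, Tuple.monotone_sort x⟩

private lemma stc_disj :
    Pairwise (Function.onFun Disjoint fun σ : Equiv.Perm (Fin 4) => stcO σ \ stcN) := by
  intro σ τ hst
  rw [Function.onFun, Set.disjoint_left]
  rintro x ⟨⟨_, hσ⟩, hN⟩ ⟨⟨_, hτ⟩, _⟩
  have heq : x ∘ σ = x ∘ τ := Tuple.unique_monotone hσ hτ
  have hex : ∃ i, σ i ≠ τ i := by
    by_contra h
    push_neg at h
    exact hst (Equiv.ext h)
  obtain ⟨i, hi⟩ := hex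
  exact hN (Set.mem_iUnion.mpr ⟨(σ i, τ i), Set.mem_iUnion.mpr ⟨hi, congrFun heq i⟩⟩)

private lemma stc_sum_eq_one : ∑ σ : Equiv.Perm (Fin 4), volume (stcO σ) = 1 := by
  apply le_antisymm
  · calc ∑ σ : Equiv.Perm (Fin 4), volume (stcO σ)
        = ∑ σ : Equiv.Perm (Fin 4), volume (stcO σ \ stcN) := by
          refine Finset.sum_congr rfl fun σ _ => (measure_diff_null stc_null_N).symm
      _ = volume (⋃ σ : Equiv.Perm (Fin 4), (stcO σ \ stcN)) := by
          rw [measure_iUnion stc_disj fun σ => (stc_meas_O σ).diff stc_meas_N, tsum_fintype]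
      _ ≤ volume {x : Fin 4 → ℝ | ∀ i, x i ∈ Set.Icc (0:ℝ) 1} :=
          measure_mono (Set.iUnion_subset fun σ x hx => hx.1.1)
      _ = 1 := stc_cube_vol
  · calc (1 : ENNReal) = volume {x : Fin 4 → ℝ | ∀ i, x i ∈ Set.Icc (0:ℝ) 1} :=
          stc_cube_vol.symm
      _ ≤ volume (⋃ σ : Equiv.Perm (Fin 4), stcO σ) := measure_mono stc_cover
      _ ≤ ∑ σ : Equiv.Perm (Fin 4), volume (stcO σ) := by
          exact measure_iUnion_fintype_le _ _

private lemma stc_vol_O1 : volume (stcO 1) = (24 : ENNReal)⁻¹ := by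
  have h : (24 : ENNReal) * volume (stcO 1) = 1 := by
    have h := stc_sum_eq_one
    rw [Finset.sum_congr rfl (fun σ _ => stc_vol_O σ), Finset.sum_const, Finset.card_univ,
      Fintype.card_perm] at h
    simpa [nsmul_eq_mul, Fintype.card_fin, show Nat.factorial 4 = 24 by rfl] using h
  calc volume (stcO 1) = (24 : ENNReal)⁻¹ * ((24:ENNReal) * volume (stcO 1)) := by
        rw [← mul_assoc, ENNReal.inv_mul_cancel (by norm_num) (by norm_num), one_mul]
    _ = (24 : ENNReal)⁻¹ := by rw [h, mul_one]

/-! ### The change of variables to the simplex -/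

private noncomputable def stcM : Matrix (Fin 4) (Fin 4) ℝ := fun i j => if j ≤ i then 1 else 0

private noncomputable def stcT : (Fin 4 → ℝ) →ₗ[ℝ] (Fin 4 → ℝ) := Matrix.toLin' stcM

private lemma stc_detT : LinearMap.det stcT = 1 := by
  rw [stcT, LinearMap.det_toLin']
  rw [Matrix.det_of_lowerTriangular stcM (by
    intro i j h
    have h' : i < j := h
    simp only [stcM, ite_eq_right_iff]
    intro hle; exact absurd (lt_of_le_of_lt hle h') (lt_irrefl _))]
  simp [stcM]

set_option maxRecDepth 4000 in
private lemma stc_T_apply (x : Fin 4 → ℝ) :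
    stcT x 0 = x 0 ∧ stcT x 1 = x 0 + x 1 ∧ stcT x 2 = x 0 + x 1 + x 2 ∧
      stcT x 3 = x 0 + x 1 + x 2 + x 3 := by
  have h : ∀ i : Fin 4, stcT x i = ∑ j : Fin 4, (if j ≤ i then 1 else 0) * x j := by
    intro i
    simp [stcT, Matrix.toLin'_apply, Matrix.mulVec, dotProduct, stcM]
  refine ⟨?_, ?_, ?_, ?_⟩ <;>
    rw [h, Fin.sum_univ_four] <;>
    norm_num [show ¬((1:Fin 4) ≤ 0) by decide, show ¬((2:Fin 4) ≤ 0) by decide,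
      show ¬((3:Fin 4) ≤ 0) by decide, show ¬((2:Fin 4) ≤ 1) by decide,
      show ¬((3:Fin 4) ≤ 1) by decide, show ¬((3:Fin 4) ≤ 2) by decide,
      show ((0:Fin 4) ≤ 1) by decide, show ((0:Fin 4) ≤ 2) by decide,
      show ((0:Fin 4) ≤ 3) by decide, show ((1:Fin 4) ≤ 2) by decide,
      show ((1:Fin 4) ≤ 3) by decide, show ((2:Fin 4) ≤ 3) by decide]

private lemma stc_T_pre :
    stcT ⁻¹' (stcO 1) = {x : Fin 4 → ℝ | (∀ i, 0 ≤ x i) ∧ ∑ i, x i ≤ 1} := by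
  ext x
  obtain ⟨h0, h1, h2, h3⟩ := stc_T_apply x
  simp only [Set.mem_preimage, stcO, Set.mem_setOf_eq, Equiv.Perm.coe_one, Function.comp_id,
    Set.mem_Icc, Fin.sum_univ_four]
  constructor
  · rintro ⟨hc, hm⟩
    have m01 : stcT x 0 ≤ stcT x 1 := hm (by decide : (0:Fin 4) ≤ 1)
    have m12 : stcT x 1 ≤ stcT x 2 := hm (by decide : (1:Fin 4) ≤ 2)
    have m23 : stcT x 2 ≤ stcT x 3 := hm (by decide : (2:Fin 4) ≤ 3)
    have hc0 := (hc 0).1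
    have hc3 := (hc 3).2
    rw [h0, h1] at m01; rw [h1, h2] at m12; rw [h2, h3] at m23
    rw [h0] at hc0; rw [h3] at hc3
    refine ⟨fun i => ?_, by linarith⟩
    fin_cases i
    · exact hc0
    · show (0:ℝ) ≤ x 1; linarith
    · show (0:ℝ) ≤ x 2; linarith
    · show (0:ℝ) ≤ x 3; linarith
  · rintro ⟨hp, hs⟩
    have p0 := hp 0; have p1 := hp 1; have p2 := hp 2; have p3 := hp 3
    have c0 : 0 ≤ stcT x 0 ∧ stcT x 0 ≤ 1 := by rw [h0]; constructor <;> linarith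
    have c1 : 0 ≤ stcT x 1 ∧ stcT x 1 ≤ 1 := by rw [h1]; constructor <;> linarith
    have c2 : 0 ≤ stcT x 2 ∧ stcT x 2 ≤ 1 := by rw [h2]; constructor <;> linarith
    have c3 : 0 ≤ stcT x 3 ∧ stcT x 3 ≤ 1 := by rw [h3]; constructor <;> linarith
    have q01 : stcT x 0 ≤ stcT x 1 := by rw [h0, h1]; linarith
    have q02 : stcT x 0 ≤ stcT x 2 := by rw [h0, h2]; linarith
    have q03 : stcT x 0 ≤ stcT x 3 := by rw [h0, h3]; linarith
    have q12 : stcT x 1 ≤ stcT x 2 := by rw [h1, h2]; linarith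
    have q13 : stcT x 1 ≤ stcT x 3 := by rw [h1, h3]; linarith
    have q23 : stcT x 2 ≤ stcT x 3 := by rw [h2, h3]; linarith
    constructor
    · intro i
      fin_cases i
      · exact c0
      · exact c1
      · exact c2
      · exact c3
    · intro a b hab
      fin_cases a <;> fin_cases b <;>
        first
        | exact le_refl _
        | exact absurd hab (by decide)
        | exact q01 | exact q02 | exact q03 | exact q12 | exact q13 | exact q23

/-- The simplex has volume `1/24`. -/
private lemma stc_simplex_vol :
    volume {x : Fin 4 → ℝ | (∀ i, 0 ≤ x i) ∧ ∑ i, x i ≤ 1} = (24 : ENNReal)⁻¹ := by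
  have hdet : LinearMap.det stcT ≠ 0 := by rw [stc_detT]; norm_num
  have hmap := Real.map_linearMap_volume_pi_eq_smul_volume_pi hdet
  rw [stc_detT] at hmap
  simp only [inv_one, abs_one, ENNReal.ofReal_one, one_smul] at hmap
  have hmeas : Measurable stcT := stcT.continuous_of_finiteDimensional.measurable
  have : volume (stcT ⁻¹' (stcO 1)) = volume (stcO 1) := by
    rw [← Measure.map_apply hmeas (stc_meas_O 1), hmap]
  rw [stc_T_pre] at this
  rw [this, stc_vol_O1]

/-- The closed-cube corner volume equals the half-open-cube corner volume. -/
private lemma stc_Ico_eq_Icc (c : ℝ) :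
    volume {x : Fin 4 → ℝ | (∀ i, x i ∈ Set.Ico (0:ℝ) 1) ∧ c ≤ ∑ i, x i} =
      volume {x : Fin 4 → ℝ | (∀ i, x i ∈ Set.Icc (0:ℝ) 1) ∧ c ≤ ∑ i, x i} := by
  set A := {x : Fin 4 → ℝ | (∀ i, x i ∈ Set.Ico (0:ℝ) 1) ∧ c ≤ ∑ i, x i}
  set C := {x : Fin 4 → ℝ | (∀ i, x i ∈ Set.Icc (0:ℝ) 1) ∧ c ≤ ∑ i, x i}
  have hAC : A ⊆ C := by
    rintro x ⟨h1, h2⟩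
    exact ⟨fun i => ⟨(h1 i).1, le_of_lt (h1 i).2⟩, h2⟩
  have hCA : C ⊆ A ∪ ⋃ i : Fin 4, {x : Fin 4 → ℝ | x i = 1} := by
    rintro x ⟨h1, h2⟩
    by_cases h : ∃ i, x i = 1
    · obtain ⟨i, hi⟩ := h
      exact Or.inr (Set.mem_iUnion.mpr ⟨i, hi⟩)
    · push_neg at h
      exact Or.inl ⟨fun i => ⟨(h1 i).1, lt_of_le_of_ne (h1 i).2 (h i)⟩, h2⟩
  apply le_antisymm (measure_mono hAC)
  calc volume C ≤ volume (A ∪ ⋃ i : Fin 4, {x : Fin 4 → ℝ | x i = 1}) := measure_mono hCA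
    _ ≤ volume A + volume (⋃ i : Fin 4, {x : Fin 4 → ℝ | x i = 1}) := measure_union_le _ _
    _ = volume A := by
        rw [measure_iUnion_null fun i => stc_null_coord i 1, add_zero]

private lemma stc_simplex_eq :
    {x : Fin 4 → ℝ | (∀ i, x i ∈ Set.Icc (0:ℝ) 1) ∧ ∑ i, x i ≤ 1} =
      {x : Fin 4 → ℝ | (∀ i, 0 ≤ x i) ∧ ∑ i, x i ≤ 1} := by
  ext x
  simp only [Set.mem_setOf_eq, Set.mem_Icc]
  constructor
  · rintro ⟨h1, h2⟩
    exact ⟨fun i => (h1 i).1, h2⟩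
  · rintro ⟨h1, h2⟩
    refine ⟨fun i => ⟨h1 i, le_trans ?_ h2⟩, h2⟩
    exact Finset.single_le_sum (fun j _ => h1 j) (Finset.mem_univ i)

/-- Single-site measures of the spatiotemporal cat on a `[1×1]` domain: the
hypercube-corner volumes are `1/4!`, `1/2`, `23/4!`, the resulting measures are
`μ(−3) = 1/(48s)`, `μ(−2) = 1/(4s)`, `μ(−1) = 1/(2s) − 1/(48s)`, `μ(m) = 1/(2s)`
for the `2s−3` interior symbols `m ∈ {0,…,2s−4}`, and these together with their
conjugates `μ(2s−3), μ(2s−2), μ(2s−1)` sum to 1. -/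
theorem spatiotemporal_single_site_measures (s : ℤ) (hs : 3 ≤ s) :
    volume {x : Fin 4 → ℝ | (∀ i, x i ∈ Set.Ico (0 : ℝ) 1) ∧ 3 ≤ ∑ i, x i} =
      ENNReal.ofReal (1 / 24) ∧
    volume {x : Fin 4 → ℝ | (∀ i, x i ∈ Set.Ico (0 : ℝ) 1) ∧ 2 ≤ ∑ i, x i} =
      ENNReal.ofReal (1 / 2) ∧
    volume {x : Fin 4 → ℝ | (∀ i, x i ∈ Set.Ico (0 : ℝ) 1) ∧ 1 ≤ ∑ i, x i} =
      ENNReal.ofReal (23 / 24) ∧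
    (1 / (48 * (s : ℝ)) + 1 / (4 * (s : ℝ)) + (1 / (2 * (s : ℝ)) - 1 / (48 * (s : ℝ)))
        + (2 * (s : ℝ) - 3) * (1 / (2 * (s : ℝ)))
        + (1 / (2 * (s : ℝ)) - 1 / (48 * (s : ℝ))) + 1 / (4 * (s : ℝ))
        + 1 / (48 * (s : ℝ)) = 1) := by
  have h24 : ENNReal.ofReal (1 / 24) = (24 : ENNReal)⁻¹ := by
    rw [ENNReal.ofReal_div_of_pos (by norm_num)]
    norm_num
  -- the closed-cube volume of {3 ≤ ∑} is 1/24
  have hv3 : volume {x : Fin 4 → ℝ | (∀ i, x i ∈ Set.Icc (0:ℝ) 1) ∧ 3 ≤ ∑ i, x i} =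
      (24 : ENNReal)⁻¹ := by
    have hr := stc_reflect 3
    rw [show (4:ℝ) - 3 = 1 by norm_num] at hr
    rw [hr, stc_simplex_eq, stc_simplex_vol]
  -- first claim
  have hc1 : volume {x : Fin 4 → ℝ | (∀ i, x i ∈ Set.Ico (0 : ℝ) 1) ∧ 3 ≤ ∑ i, x i} =
      ENNReal.ofReal (1 / 24) := by
    rw [stc_Ico_eq_Icc, hv3, h24]
  -- second claim
  have hv2 : volume {x : Fin 4 → ℝ | (∀ i, x i ∈ Set.Icc (0:ℝ) 1) ∧ 2 ≤ ∑ i, x i} =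
      (2 : ENNReal)⁻¹ := by
    have hr := stc_reflect 2
    rw [show (4:ℝ) - 2 = 2 by norm_num] at hr
    have hsp := stc_split 2
    rw [← hr] at hsp
    have h2 : (2 : ENNReal) * volume {x : Fin 4 → ℝ |
        (∀ i, x i ∈ Set.Icc (0:ℝ) 1) ∧ 2 ≤ ∑ i, x i} = 1 := by
      rw [two_mul]; exact hsp
    calc volume {x : Fin 4 → ℝ | (∀ i, x i ∈ Set.Icc (0:ℝ) 1) ∧ 2 ≤ ∑ i, x i}
        = (2 : ENNReal)⁻¹ * ((2:ENNReal) * volume {x : Fin 4 → ℝ |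
            (∀ i, x i ∈ Set.Icc (0:ℝ) 1) ∧ 2 ≤ ∑ i, x i}) := by
          rw [← mul_assoc, ENNReal.inv_mul_cancel (by norm_num) (by norm_num), one_mul]
      _ = (2 : ENNReal)⁻¹ := by rw [h2, mul_one]
  have hc2 : volume {x : Fin 4 → ℝ | (∀ i, x i ∈ Set.Ico (0 : ℝ) 1) ∧ 2 ≤ ∑ i, x i} =
      ENNReal.ofReal (1 / 2) := by
    rw [stc_Ico_eq_Icc, hv2, ENNReal.ofReal_div_of_pos (by norm_num)]
    norm_num
  -- third claim
  have hv1 : volume {x : Fin 4 → ℝ | (∀ i, x i ∈ Set.Icc (0:ℝ) 1) ∧ 1 ≤ ∑ i, x i} =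
      ENNReal.ofReal (23 / 24) := by
    have hr := stc_reflect 1
    rw [show (4:ℝ) - 1 = 3 by norm_num] at hr
    have hsp := stc_split 3
    rw [hv3, ← hr] at hsp
    have hone : (1 : ENNReal) = (24 : ENNReal)⁻¹ + ENNReal.ofReal (23 / 24) := by
      rw [← h24, ← ENNReal.ofReal_add (by norm_num) (by norm_num)]
      norm_num
    rw [hone] at hsp
    exact (ENNReal.add_right_inj (show (24:ENNReal)⁻¹ ≠ ⊤ by norm_num)).mp hsp
  have hc3 : volume {x : Fin 4 → ℝ | (∀ i, x i ∈ Set.Ico (0 : ℝ) 1) ∧ 1 ≤ ∑ i, x i} =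
      ENNReal.ofReal (23 / 24) := by
    rw [stc_Ico_eq_Icc, hv1]
  -- the algebraic identity
  have hs0 : (s : ℝ) ≠ 0 := by
    have : (3 : ℝ) ≤ (s : ℝ) := by exact_mod_cast hs
    linarith
  refine ⟨hc1, hc2, hc3, ?_⟩
  field_simp
  ring
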